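/- Let π_f be a cyclic *-representation of R_∞ with cyclic vector ξ_f realizing an S_∞-central state f. Then for each k, the weak operator limit O_k = lim_n π_f((k n)) exists, the operators O_k pairwise commute, and π_f(s) O_k π_f(s⁻¹) = O_{s(k)} for all s ∈ S_∞. -/

import Mathlib

open scoped ComplexInnerProductSpace
open Filter Topology

/-- Partial maps of `ℕ`, modeling elements of the symmetric inverse semigroup `R_∞`. -/
def PB := ℕ → Option ℕ

/-- Composition of partial maps: `(a * b)(x) = a(b(x))`. -/
def PB.mul (a b : PB) : PB := fun x => (b x).bind a

/-- The identity of `R_∞`. -/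
def PB.one : PB := fun x => some x

/-- Membership in `R_∞`: injective, identity outside a finite set. -/
def PB.Valid (g : PB) : Prop :=
  (∀ x y z, g x = some z → g y = some z → x = y) ∧ {x | g x ≠ some x}.Finite

/-- A permutation of `ℕ` viewed as an element of `R_∞`. -/
def permPB (s : Equiv.Perm ℕ) : PB := fun x => some (s x)

/-- Finite (finitary) permutations of `ℕ`: the elements of `S_∞ ⊂ R_∞`. -/
def FinPerm (s : Equiv.Perm ℕ) : Prop := {x | s x ≠ x}.Finite

namespace PBaux

lemma pb_bind_some (a : ℕ) (f : PB) : (some a).bind f = f a := rfl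

lemma pbmul_assoc (a b c : PB) : (a.mul b).mul c = a.mul (b.mul c) := by
  funext x
  simp only [PB.mul]
  cases c x <;> rfl

lemma pbone_mul (a : PB) : PB.one.mul a = a := by
  funext x; simp only [PB.mul, PB.one]; cases a x <;> rfl

lemma pbmul_one (a : PB) : a.mul PB.one = a := rfl

lemma permPB_mul (s t : Equiv.Perm ℕ) : (permPB s).mul (permPB t) = permPB (s * t) := by
  funext x; rfl

lemma permPB_one : permPB 1 = PB.one := by funext x; simp [permPB, PB.one]

lemma permPB_valid {s : Equiv.Perm ℕ} (hs : FinPerm s) : (permPB s).Valid := by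
  constructor
  · intro x y z hx hy
    simp only [permPB, Option.some.injEq] at hx hy
    exact s.injective (hx.trans hy.symm)
  · have : {x | permPB s x ≠ some x} = {x | s x ≠ x} := by
      ext x; simp [permPB]
    rw [this]; exact hs

lemma finPerm_one : FinPerm 1 := by
  have : {x : ℕ | (1 : Equiv.Perm ℕ) x ≠ x} = ∅ := by ext x; simp
  rw [FinPerm, this]; exact Set.finite_empty

lemma finPerm_swap (k n : ℕ) : FinPerm (Equiv.swap k n) := by
  apply Set.Finite.subset ((Set.finite_singleton n).insert k)
  intro x hx
  rw [Set.mem_insert_iff, Set.mem_singleton_iff]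
  by_contra hc
  push_neg at hc
  exact hx (Equiv.swap_apply_of_ne_of_ne hc.1 hc.2)

lemma finPerm_mul {s t : Equiv.Perm ℕ} (hs : FinPerm s) (ht : FinPerm t) : FinPerm (s * t) := by
  apply Set.Finite.subset (hs.union ht)
  intro x hx
  simp only [Set.mem_setOf_eq, Equiv.Perm.mul_apply] at hx
  by_contra hc
  simp only [Set.mem_union, Set.mem_setOf_eq] at hc
  push_neg at hc
  rw [hc.2, hc.1] at hx; exact hx rfl

lemma finPerm_inv {s : Equiv.Perm ℕ} (hs : FinPerm s) : FinPerm s⁻¹ := by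
  apply Set.Finite.subset (hs.image s)
  intro x hx
  simp only [Set.mem_setOf_eq] at hx
  refine ⟨s⁻¹ x, ?_, by simp⟩
  simp only [Set.mem_setOf_eq]
  intro h
  rw [← Equiv.Perm.mul_apply, mul_inv_cancel, Equiv.Perm.one_apply] at h
  exact hx h.symm

lemma mul_valid {a b : PB} (ha : a.Valid) (hb : b.Valid) : (a.mul b).Valid := by
  constructor
  · intro x y z hx hy
    simp only [PB.mul] at hx hy
    rcases hbx : b x with _ | u
    · rw [hbx] at hx; cases hx
    rcases hby : b y with _ | v
    · rw [hby] at hy; cases hy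
    rw [hbx] at hx; rw [hby] at hy; change a u = some z at hx; change a v = some z at hy
    have := ha.1 u v z hx hy
    exact hb.1 x y u hbx (this ▸ hby)
  · apply Set.Finite.subset (ha.2.union hb.2)
    intro x hx
    simp only [Set.mem_setOf_eq, PB.mul] at hx
    by_contra hc
    simp only [Set.mem_union, Set.mem_setOf_eq] at hc
    push_neg at hc
    rw [hc.2] at hx; simp at hx; exact hx hc.1

open Classical in
noncomputable def star (g : PB) : PB := fun y =>
  if h : ∃ x, g x = some y then some h.choose else none

lemma star_some {g : PB} (hg : g.Valid) {x y : ℕ} :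
    star g y = some x ↔ g x = some y := by
  constructor
  · intro h
    simp only [star] at h
    split_ifs at h with hex
    · simp only [Option.some.injEq] at h
      rw [← h]; exact hex.choose_spec
  · intro h
    have hex : ∃ x, g x = some y := ⟨x, h⟩
    simp only [star, dif_pos hex, Option.some.injEq]
    exact hg.1 _ _ _ hex.choose_spec h

def badSet (a : PB) : Set ℕ :=
  {x | a x ≠ some x} ∪ {y | ∃ x, a x ≠ some x ∧ a x = some y}

lemma badSet_finite {a : PB} (ha : a.Valid) : (badSet a).Finite := by
  apply Set.Finite.union ha.2
  apply Set.Finite.subset (ha.2.image (fun x => (a x).getD 0))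
  rintro y ⟨x, hx, hxy⟩
  exact ⟨x, hx, by show (a x).getD 0 = y; rw [hxy]; rfl⟩

lemma fix_of_not_bad {a : PB} {x : ℕ} (hx : x ∉ badSet a) : a x = some x := by
  by_contra h
  exact hx (Or.inl h)

lemma badSet_star {g : PB} (hg : g.Valid) : badSet (star g) ⊆ badSet g := by
  intro y hy
  rcases hy with hy | ⟨z, hz1, hz2⟩
  · -- star g y ≠ some y
    rcases h : star g y with _ | x
    · left
      intro hgy
      rw [(star_some hg).mpr hgy] at h
      cases h
    · have hgx : g x = some y := (star_some hg).mp h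
      have hxy : x ≠ y := fun e => hy (by rw [h, e])
      right
      refine ⟨x, ?_, hgx⟩
      rw [hgx]
      intro hc
      exact hxy (Option.some_injective _ hc).symm
  · -- star g z = some y, star g z ≠ some z
    have hgy : g y = some z := (star_some hg).mp hz2
    have hyz : y ≠ z := fun e => hz1 (by rw [hz2, e])
    left
    show g y ≠ some y
    rw [hgy]
    intro hc
    exact hyz (Option.some_injective _ hc).symm

lemma star_valid {g : PB} (hg : g.Valid) : (star g).Valid := by
  constructor
  · intro x y z hx hy
    have := ((star_some hg).mp hx).symm.trans ((star_some hg).mp hy)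
    exact Option.some_injective _ this
  · exact Set.Finite.subset (badSet_finite hg) (fun x hx => badSet_star hg (Or.inl hx))

end PBaux

namespace PBaux

lemma star_mul_self {g : PB} (hg : g.Valid) :
    ∀ x, (PB.mul (star g) g) x = if g x = none then none else some x := by
  intro x
  simp only [PB.mul]
  rcases h : g x with _ | y
  · simp; rfl
  · rw [if_neg (by simp), pb_bind_some]
    exact (star_some hg).mpr h

lemma self_mul_star {g : PB} (hg : g.Valid) :
    ∀ y, (PB.mul g (star g)) y = if star g y = none then none else some y := by
  intro y
  simp only [PB.mul]
  rcases h : star g y with _ | x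
  · simp; rfl
  · rw [if_neg (by simp), pb_bind_some]
    exact (star_some hg).mp h

lemma e_idem {g : PB} (hg : g.Valid) :
    (PB.mul (star g) g).mul (PB.mul (star g) g) = PB.mul (star g) g := by
  funext x
  conv_lhs => rw [PB.mul]
  rw [star_mul_self hg x]
  rcases h : g x with _ | y
  · simp; rfl
  · rw [if_neg (by simp), pb_bind_some, star_mul_self hg x, if_neg (by simp [h])]

lemma f_idem {g : PB} (hg : g.Valid) :
    (PB.mul g (star g)).mul (PB.mul g (star g)) = PB.mul g (star g) := by
  funext y
  conv_lhs => rw [PB.mul]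
  rw [self_mul_star hg y]
  rcases h : star g y with _ | x
  · simp; rfl
  · rw [if_neg (by simp), pb_bind_some, self_mul_star hg y, if_neg (by simp [h])]

lemma mul_e {g : PB} (hg : g.Valid) : g.mul (PB.mul (star g) g) = g := by
  funext x
  conv_lhs => rw [PB.mul]
  rw [star_mul_self hg x]
  rcases h : g x with _ | y
  · simp [h]; rfl
  · rw [if_neg (by simp [h]), pb_bind_some]; exact h

lemma f_mul {g : PB} (hg : g.Valid) : (PB.mul g (star g)).mul g = g := by
  funext x
  conv_lhs => rw [PB.mul]
  rcases h : g x with _ | y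
  · rfl
  · rw [pb_bind_some, self_mul_star hg y,
      if_neg (by simp [(star_some hg).mpr h])]

lemma e_mul_star {g : PB} (hg : g.Valid) :
    (PB.mul (star g) g).mul (star g) = star g := by
  funext y
  conv_lhs => rw [PB.mul]
  rcases h : star g y with _ | x
  · rfl
  · rw [pb_bind_some, star_mul_self hg x,
      if_neg (by simp [(star_some hg).mp h])]

/-- swap (n m) commutes with `a` when n,m avoid the bad set of `a`. -/
lemma tau_comm {a : PB} {n m : ℕ} (hn : n ∉ badSet a) (hm : m ∉ badSet a) :
    (permPB (Equiv.swap n m)).mul a = a.mul (permPB (Equiv.swap n m)) := by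
  funext x
  show (a x).bind (permPB (Equiv.swap n m)) = ((permPB (Equiv.swap n m)) x).bind a
  simp only [permPB, pb_bind_some]
  by_cases hxn : x = n
  · subst hxn
    rw [fix_of_not_bad hn, pb_bind_some, Equiv.swap_apply_left, fix_of_not_bad hm]
    exact congrArg some (Equiv.swap_apply_left x m)
  by_cases hxm : x = m
  · subst hxm
    rw [fix_of_not_bad hm, pb_bind_some, Equiv.swap_apply_right, fix_of_not_bad hn]
    exact congrArg some (Equiv.swap_apply_right n x)
  · rw [Equiv.swap_apply_of_ne_of_ne hxn hxm]
    rcases h : a x with _ | y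
    · rfl
    · rw [pb_bind_some]
      have hyn : y ≠ n := by
        rintro rfl
        by_cases hax : a x = some x
        · exact hxn (Option.some_injective _ (hax.symm.trans h))
        · exact hn (Or.inr ⟨x, hax, h⟩)
      have hym : y ≠ m := by
        rintro rfl
        by_cases hax : a x = some x
        · exact hxm (Option.some_injective _ (hax.symm.trans h))
        · exact hm (Or.inr ⟨x, hax, h⟩)
      exact congrArg some (Equiv.swap_apply_of_ne_of_ne hyn hym)

lemma badSet_perm_mul {s : Equiv.Perm ℕ} (b : PB) :
    badSet ((permPB s).mul b) ⊆ badSet b ∪ {x | s x ≠ x} := by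
  have hfix : ∀ x, x ∉ badSet b ∪ {x | s x ≠ x} → ((permPB s).mul b) x = some x := by
    intro x hx
    have h1 : x ∉ badSet b := fun h => hx (Or.inl h)
    have h2 : s x = x := by
      by_contra h
      exact hx (Or.inr h)
    show (b x).bind (permPB s) = some x
    rw [fix_of_not_bad h1, pb_bind_some]
    simp [permPB, h2]
  intro y hy
  rcases hy with hy | ⟨x, hx1, hx2⟩
  · by_contra hc
    exact hy (hfix y hc)
  · by_contra hc
    simp only [Set.mem_union, Set.mem_setOf_eq] at hc
    push_neg at hc
    have hyb : y ∉ badSet b := hc.1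
    have hys : s y = y := hc.2
    change (b x).bind (permPB s) ≠ some x at hx1
    change (b x).bind (permPB s) = some y at hx2
    rcases h : b x with _ | z
    · rw [h] at hx2; cases hx2
    · rw [h, pb_bind_some] at hx2
      simp only [permPB, Option.some.injEq] at hx2
      have hzy : z = y := s.injective (by rw [hx2, hys])
      subst hzy
      by_cases hbx : b x = some x
      · have hxy : x = z := Option.some_injective _ (hbx.symm.trans h)
        apply hx1
        rw [h, pb_bind_some]
        simp only [permPB, Option.some.injEq]
        exact hx2.trans hxy.symm
      · exact hyb (Or.inr ⟨x, hbx, h⟩)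

end PBaux

namespace PBaux

variable {H : Type*} [NormedAddCommGroup H] [InnerProductSpace ℂ H] [CompleteSpace H]

/-- An idempotent contraction on a Hilbert space is self-adjoint. -/
lemma idem_contraction_selfAdjoint (E : H →L[ℂ] H) (hEE : E ∘L E = E) (hE : ‖E‖ ≤ 1) :
    ContinuousLinearMap.adjoint E = E := by
  have happ : ∀ x, E (E x) = E x := fun x => congrFun (congrArg DFunLike.coe hEE) x
  have horth : ∀ u v : H, E u = u → E v = 0 → (inner ℂ u v : ℂ) = 0 := by
    intro u v hu hv
    by_contra hp
    have hp0 : 0 < ‖(inner ℂ u v : ℂ)‖ := norm_pos_iff.mpr hp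
    set p : ℂ := inner ℂ u v with hpdef
    set t : ℝ := 1 / (1 + ‖v‖ ^ 2) with htdef
    have ht0 : 0 < t := by positivity
    have hts : t * (1 + ‖v‖ ^ 2) = 1 := by
      rw [htdef]; field_simp
    set c : ℂ := ((-t : ℝ) : ℂ) * (starRingEnd ℂ) p with hcdef
    have hle : ‖u‖ ≤ ‖u + c • v‖ := by
      have h1 : E (u + c • v) = u := by
        rw [map_add, hu, map_smul, hv, smul_zero, add_zero]
      calc ‖u‖ = ‖E (u + c • v)‖ := by rw [h1]
        _ ≤ ‖E‖ * ‖u + c • v‖ := E.le_opNorm _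
        _ ≤ 1 * ‖u + c • v‖ := mul_le_mul_of_nonneg_right hE (norm_nonneg _)
        _ = ‖u + c • v‖ := by rw [_root_.one_mul]
    have hsq : ‖u‖ ^ 2 ≤ ‖u + c • v‖ ^ 2 :=
      pow_le_pow_left₀ (norm_nonneg _) hle 2
    rw [norm_add_sq (𝕜 := ℂ)] at hsq
    have hinner : (inner ℂ u (c • v) : ℂ) = c * p := by rw [inner_smul_right]
    rw [hinner] at hsq
    have hre : RCLike.re (c * p) = -(t * ‖p‖ ^ 2) := by
      have hc : c * p = ((-t : ℝ) : ℂ) * ((starRingEnd ℂ) p * p) := by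
        rw [hcdef]; ring
      rw [hc, RCLike.conj_mul]
      simp [← Complex.ofReal_pow, ← Complex.ofReal_mul]
    rw [hre] at hsq
    have hnc : ‖c • v‖ = t * ‖p‖ * ‖v‖ := by
      rw [norm_smul, hcdef, norm_mul]
      simp [abs_of_pos ht0, mul_assoc]
    rw [hnc] at hsq
    have hv2 : t * ‖v‖ ^ 2 ≤ 1 := by nlinarith [sq_nonneg ‖v‖]
    nlinarith [mul_pos ht0 (mul_pos hp0 hp0), sq_nonneg ‖v‖]
  have hsa : ∀ x y : H, (inner ℂ (E x) y : ℂ) = inner ℂ x (E y) := by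
    intro x y
    have h1 : (inner ℂ (E x) y : ℂ) = inner ℂ (E x) (E y) := by
      have hy : E y + (y - E y) = y := by abel
      conv_lhs => rw [← hy]
      rw [inner_add_right, horth (E x) (y - E y) (happ x)
        (by rw [map_sub, happ, sub_self]), add_zero]
    have h2 : (inner ℂ x (E y) : ℂ) = inner ℂ (E x) (E y) := by
      have hx : E x + (x - E x) = x := by abel
      conv_lhs => rw [← hx]
      rw [inner_add_left,
        inner_eq_zero_symm.mp (horth (E y) (x - E x) (happ y)
          (by rw [map_sub, happ, sub_self])), add_zero]
    rw [h1, h2]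
  exact ((ContinuousLinearMap.eq_adjoint_iff E E).mpr hsa).symm

lemma adjoint_eq (T S E F : H →L[ℂ] H)
    (hT : ‖T‖ ≤ 1) (hS : ‖S‖ ≤ 1) (hE : ‖E‖ ≤ 1) (hF : ‖F‖ ≤ 1)
    (hEE : E ∘L E = E) (hFF : F ∘L F = F)
    (hST : S ∘L T = E) (hTS : T ∘L S = F)
    (hTE : T ∘L E = T) (hFT : F ∘L T = T) (hES : E ∘L S = S) :
    ContinuousLinearMap.adjoint T = S := by
  have hEadj := idem_contraction_selfAdjoint E hEE hE
  have happE : ∀ x, E (E x) = E x := fun x => congrFun (congrArg DFunLike.coe hEE) x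
  have happST : ∀ x, S (T x) = E x := fun x => congrFun (congrArg DFunLike.coe hST) x
  have happTE : ∀ x, T (E x) = T x := fun x => congrFun (congrArg DFunLike.coe hTE) x
  have hsymE : ∀ u v : H, (inner ℂ (E u) v : ℂ) = inner ℂ u (E v) := by
    intro u v
    nth_rewrite 1 [← hEadj]
    exact ContinuousLinearMap.adjoint_inner_left E v u
  have hnorm : ∀ x, ‖T x‖ = ‖E x‖ := by
    intro x
    have le1 : ‖E x‖ ≤ ‖T x‖ := by
      calc ‖E x‖ = ‖S (T x)‖ := by rw [happST]
        _ ≤ ‖S‖ * ‖T x‖ := S.le_opNorm _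
        _ ≤ 1 * ‖T x‖ := mul_le_mul_of_nonneg_right hS (norm_nonneg _)
        _ = ‖T x‖ := by rw [_root_.one_mul]
    have le2 : ‖T x‖ ≤ ‖E x‖ := by
      calc ‖T x‖ = ‖T (E x)‖ := by rw [happTE]
        _ ≤ ‖T‖ * ‖E x‖ := T.le_opNorm _
        _ ≤ 1 * ‖E x‖ := mul_le_mul_of_nonneg_right hT (norm_nonneg _)
        _ = ‖E x‖ := by rw [_root_.one_mul]
    exact le_antisymm le2 le1
  have hTT : ContinuousLinearMap.adjoint T ∘L T = E := by
    have hzero : ∀ x : H,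
        (inner ℂ ((ContinuousLinearMap.adjoint T ∘L T - E) x) x : ℂ) = 0 := by
      intro x
      rw [ContinuousLinearMap.sub_apply, inner_sub_left, ContinuousLinearMap.comp_apply,
        ContinuousLinearMap.adjoint_inner_left]
      have hEx : (inner ℂ (E x) x : ℂ) = inner ℂ (E x) (E x) :=
        calc (inner ℂ (E x) x : ℂ) = inner ℂ (E (E x)) x := by rw [happE]
          _ = inner ℂ (E x) (E x) := hsymE (E x) x
      rw [hEx, inner_self_eq_norm_sq_to_K, inner_self_eq_norm_sq_to_K, hnorm, sub_self]
    have hA : (((ContinuousLinearMap.adjoint T ∘L T - E : H →L[ℂ] H)) : H →ₗ[ℂ] H) = 0 :=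
      (inner_map_self_eq_zero _).mp (fun x => hzero x)
    have hzero2 : ContinuousLinearMap.adjoint T ∘L T - E = 0 := by
      ext x
      have := DFunLike.congr_fun hA x
      simpa using this
    rw [sub_eq_zero] at hzero2
    exact hzero2
  calc ContinuousLinearMap.adjoint T
      = ContinuousLinearMap.adjoint (F ∘L T) := by rw [hFT]
    _ = ContinuousLinearMap.adjoint T ∘L ContinuousLinearMap.adjoint F := by
        rw [ContinuousLinearMap.adjoint_comp]
    _ = ContinuousLinearMap.adjoint T ∘L F := by
        rw [idem_contraction_selfAdjoint F hFF hF]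
    _ = ContinuousLinearMap.adjoint T ∘L (T ∘L S) := by rw [hTS]
    _ = (ContinuousLinearMap.adjoint T ∘L T) ∘L S := by rw [ContinuousLinearMap.comp_assoc]
    _ = E ∘L S := by rw [hTT]
    _ = S := hES

end PBaux

open PBaux

/-- Let `π_f` be a cyclic `*`-representation of `R_∞` with cyclic
vector `ξ_f` realizing an `S_∞`-central state `f`.  Then for each `k` the weak
operator limit `O_k = lim_n π_f((k n))` exists, the `O_k` pairwise commute, and
`π_f(s) O_k π_f(s⁻¹) = O_{s(k)}` for all `s ∈ S_∞`. -/
theorem stmt13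
    {H : Type*} [NormedAddCommGroup H] [InnerProductSpace ℂ H] [CompleteSpace H]
    (π : PB → H →L[ℂ] H) (ξ : H)
    (hone : π PB.one = 1)
    (hmul : ∀ a b : PB, a.Valid → b.Valid → π (a.mul b) = π a ∘L π b)
    (hnorm : ∀ r : PB, r.Valid → ‖π r‖ ≤ 1)
    (hcentral : ∀ s : Equiv.Perm ℕ, FinPerm s → ∀ r : PB, r.Valid →
      ⟪π ((permPB s).mul r) ξ, ξ⟫ = ⟪π (r.mul (permPB s)) ξ, ξ⟫)
    (hcyc : (Submodule.span ℂ {x | ∃ r : PB, r.Valid ∧ x = π r ξ}).topologicalClosure = ⊤) :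
    ∃ O : ℕ → H →L[ℂ] H,
      (∀ k, ∀ η ζ : H,
        Tendsto (fun n => ⟪π (permPB (Equiv.swap k n)) η, ζ⟫) atTop (𝓝 ⟪O k η, ζ⟫)) ∧
      (∀ k l, O k ∘L O l = O l ∘L O k) ∧
      (∀ s : Equiv.Perm ℕ, FinPerm s → ∀ k,
        π (permPB s) ∘L O k ∘L π (permPB s⁻¹) = O (s k)) := by
  classical
  have hone_norm : ‖(1 : H →L[ℂ] H)‖ ≤ 1 := by
    rw [ContinuousLinearMap.one_def]; exact ContinuousLinearMap.norm_id_le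
  have honecomp : ∀ A : H →L[ℂ] H, (1 : H →L[ℂ] H) ∘L A = A := fun A => by ext x; simp
  have honecomp' : ∀ A : H →L[ℂ] H, A ∘L (1 : H →L[ℂ] H) = A := fun A => by ext x; simp
  have hpermadj : ∀ s : Equiv.Perm ℕ, FinPerm s →
      ContinuousLinearMap.adjoint (π (permPB s)) = π (permPB s⁻¹) := by
    intro s hs
    have hsV := permPB_valid hs
    have hsV' := permPB_valid (finPerm_inv hs)
    have hcomp1 : π (permPB s⁻¹) ∘L π (permPB s) = 1 := by
      rw [← hmul _ _ hsV' hsV, permPB_mul]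
      simp [permPB_one, hone]
    have hcomp2 : π (permPB s) ∘L π (permPB s⁻¹) = 1 := by
      rw [← hmul _ _ hsV hsV', permPB_mul]
      simp [permPB_one, hone]
    exact adjoint_eq (π (permPB s)) (π (permPB s⁻¹)) 1 1
      (hnorm _ hsV) (hnorm _ hsV') hone_norm hone_norm
      (honecomp 1) (honecomp 1) hcomp1 hcomp2
      (honecomp' _) (honecomp _) (honecomp _)
  have hadjstar : ∀ g : PB, g.Valid →
      ContinuousLinearMap.adjoint (π g) = π (PBaux.star g) := by
    intro g hg
    have hgV' := star_valid hg
    have heV : (PB.mul (PBaux.star g) g).Valid := mul_valid hgV' hg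
    have hfV : (PB.mul g (PBaux.star g)).Valid := mul_valid hg hgV'
    refine adjoint_eq (π g) (π (PBaux.star g)) (π (PB.mul (PBaux.star g) g))
      (π (PB.mul g (PBaux.star g))) (hnorm _ hg) (hnorm _ hgV') (hnorm _ heV) (hnorm _ hfV)
      ?_ ?_ ?_ ?_ ?_ ?_ ?_
    · rw [← hmul _ _ heV heV, e_idem hg]
    · rw [← hmul _ _ hfV hfV, f_idem hg]
    · rw [← hmul _ _ hgV' hg]
    · rw [← hmul _ _ hg hgV']
    · rw [← hmul _ _ hg heV, mul_e hg]
    · rw [← hmul _ _ hfV hg, f_mul hg]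
    · rw [← hmul _ _ heV hgV', e_mul_star hg]
  have happly : ∀ (a b : PB), a.Valid → b.Valid → ∀ v : H, π a (π b v) = π (a.mul b) v := by
    intro a b ha hb v
    rw [hmul a b ha hb]; rfl
  have hswapfin : ∀ k n : ℕ, FinPerm (Equiv.swap k n) := finPerm_swap
  have hswapV : ∀ k n : ℕ, (permPB (Equiv.swap k n)).Valid :=
    fun k n => permPB_valid (hswapfin k n)
  have hmove : ∀ (s : Equiv.Perm ℕ), FinPerm s → ∀ u v : H,
      ⟪π (permPB s) u, v⟫ = ⟪u, π (permPB s⁻¹) v⟫ := by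
    intro s hs u v
    rw [← hpermadj s hs]
    exact (ContinuousLinearMap.adjoint_inner_right (π (permPB s)) u v).symm
  have hswapmove : ∀ (k n : ℕ) (u v : H),
      ⟪π (permPB (Equiv.swap k n)) u, v⟫ = ⟪u, π (permPB (Equiv.swap k n)) v⟫ := by
    intro k n u v
    have h := hmove _ (hswapfin k n) u v
    rwa [Equiv.swap_inv] at h
  have hform : ∀ (c a b : PB), c.Valid → a.Valid → b.Valid →
      ⟪π c (π a ξ), π b ξ⟫ = ⟪π ((PBaux.star b).mul (c.mul a)) ξ, ξ⟫ := by
    intro c a b hc ha hb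
    rw [happly c a hc ha]
    have h1 : ⟪π (PBaux.star b) (π (c.mul a) ξ), ξ⟫ = ⟪π (c.mul a) ξ, π b ξ⟫ := by
      rw [← hadjstar b hb]
      exact ContinuousLinearMap.adjoint_inner_left (π b) ξ (π (c.mul a) ξ)
    rw [← h1, happly _ _ (star_valid hb) (mul_valid hc ha)]
  have core : ∀ (k : ℕ) (a b : PB), a.Valid → b.Valid → ∀ n m : ℕ,
      n ∉ badSet a → n ∉ badSet b → n ≠ k → m ∉ badSet a → m ∉ badSet b → m ≠ k →
      ⟪π (permPB (Equiv.swap k n)) (π a ξ), π b ξ⟫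
        = ⟪π (permPB (Equiv.swap k m)) (π a ξ), π b ξ⟫ := by
    intro k a b ha hb n m hna hnb hnk hma hmb hmk
    rw [hform _ _ _ (hswapV k n) ha hb, hform _ _ _ (hswapV k m) ha hb]
    have hbs := star_valid hb
    have hconj : Equiv.swap k m = Equiv.swap n m * Equiv.swap k n * Equiv.swap n m := by
      have h := Equiv.swap_apply_apply (Equiv.swap n m) k n
      rw [Equiv.swap_apply_of_ne_of_ne (Ne.symm hnk) (Ne.symm hmk), Equiv.swap_apply_left,
        Equiv.swap_inv] at h
      exact h
    have h1 : permPB (Equiv.swap k m)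
        = (permPB (Equiv.swap n m)).mul ((permPB (Equiv.swap k n)).mul (permPB (Equiv.swap n m))) := by
      rw [permPB_mul, permPB_mul, hconj, mul_assoc]
    have hcomm_a : (permPB (Equiv.swap n m)).mul a = a.mul (permPB (Equiv.swap n m)) :=
      tau_comm hna hma
    have hcomm_b : (permPB (Equiv.swap n m)).mul (PBaux.star b)
        = (PBaux.star b).mul (permPB (Equiv.swap n m)) :=
      tau_comm (fun h => hnb (badSet_star hb h)) (fun h => hmb (badSet_star hb h))
    have hPB : (PBaux.star b).mul ((permPB (Equiv.swap k m)).mul a)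
        = (permPB (Equiv.swap n m)).mul
            ((((PBaux.star b).mul ((permPB (Equiv.swap k n)).mul a))).mul
              (permPB (Equiv.swap n m))) := by
      rw [h1]
      simp only [pbmul_assoc]
      rw [hcomm_a, ← pbmul_assoc (PBaux.star b) (permPB (Equiv.swap n m)), ← hcomm_b,
        pbmul_assoc]
    rw [hPB]
    have hRV : (((PBaux.star b).mul ((permPB (Equiv.swap k n)).mul a)).mul
        (permPB (Equiv.swap n m))).Valid :=
      mul_valid (mul_valid hbs (mul_valid (hswapV k n) ha)) (hswapV n m)
    rw [hcentral (Equiv.swap n m) (hswapfin n m) _ hRV]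
    have hττ : (permPB (Equiv.swap n m)).mul (permPB (Equiv.swap n m)) = PB.one := by
      rw [permPB_mul, Equiv.swap_mul_self, permPB_one]
    rw [pbmul_assoc _ (permPB (Equiv.swap n m)) (permPB (Equiv.swap n m)), hττ, pbmul_one]
  -- bound extraction for finite sets of naturals
  have bddN : ∀ s : Set ℕ, s.Finite → ∃ N : ℕ, ∀ x ∈ s, x < N := by
    intro s hs
    obtain ⟨b, hb⟩ := hs.bddAbove
    exact ⟨b + 1, fun x hx => Nat.lt_succ_of_le (hb hx)⟩
  have hdense : Dense ((Submodule.span ℂ {x | ∃ r : PB, r.Valid ∧ x = π r ξ} : Submodule ℂ H) : Set H) := by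
    rw [dense_iff_closure_eq]
    have := congrArg (fun W : Submodule ℂ H => (W : Set H)) hcyc
    simpa [Submodule.topologicalClosure_coe] using this
  have hsnorm : ∀ (r : PB), r.Valid → ∀ η : H, ‖π r η‖ ≤ ‖η‖ := by
    intro r hr η
    calc ‖π r η‖ ≤ ‖π r‖ * ‖η‖ := (π r).le_opNorm η
      _ ≤ 1 * ‖η‖ := mul_le_mul_of_nonneg_right (hnorm r hr) (norm_nonneg _)
      _ = ‖η‖ := by rw [_root_.one_mul]
  -- stabilization over the span
  have stab : ∀ k : ℕ, ∀ η ∈ Submodule.span ℂ {x | ∃ r : PB, r.Valid ∧ x = π r ξ},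
      ∀ ζ ∈ Submodule.span ℂ {x | ∃ r : PB, r.Valid ∧ x = π r ξ},
      ∃ N : ℕ, ∀ n m : ℕ, N ≤ n → N ≤ m →
        ⟪π (permPB (Equiv.swap k n)) η, ζ⟫ = ⟪π (permPB (Equiv.swap k m)) η, ζ⟫ := by
    intro k η hη ζ hζ
    have stab1 : ∀ (a : PB), a.Valid →
        ∀ ζ' ∈ Submodule.span ℂ {x | ∃ r : PB, r.Valid ∧ x = π r ξ},
        ∃ N : ℕ, ∀ n m : ℕ, N ≤ n → N ≤ m →
          ⟪π (permPB (Equiv.swap k n)) (π a ξ), ζ'⟫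
            = ⟪π (permPB (Equiv.swap k m)) (π a ξ), ζ'⟫ := by
      intro a ha ζ' hζ'
      induction hζ' using Submodule.span_induction with
      | mem x hx =>
        obtain ⟨b, hb, rfl⟩ := hx
        obtain ⟨N, hN⟩ := bddN (badSet a ∪ badSet b ∪ {k})
          (((badSet_finite ha).union (badSet_finite hb)).union (Set.finite_singleton k))
        refine ⟨N, fun n m hn hm => ?_⟩
        have hn' : n ∉ badSet a ∪ badSet b ∪ {k} := fun h => absurd (hN n h) (by omega)
        have hm' : m ∉ badSet a ∪ badSet b ∪ {k} := fun h => absurd (hN m h) (by omega)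
        exact core k a b ha hb n m
          (fun h => hn' (Or.inl (Or.inl h))) (fun h => hn' (Or.inl (Or.inr h)))
          (fun h => hn' (Or.inr h))
          (fun h => hm' (Or.inl (Or.inl h))) (fun h => hm' (Or.inl (Or.inr h)))
          (fun h => hm' (Or.inr h))
      | zero => exact ⟨0, fun n m _ _ => by simp⟩
      | add x y hx hy ihx ihy =>
        obtain ⟨N1, h1⟩ := ihx
        obtain ⟨N2, h2⟩ := ihy
        refine ⟨max N1 N2, fun n m hn hm => ?_⟩
        rw [inner_add_right, inner_add_right,
          h1 n m (le_trans (le_max_left _ _) hn) (le_trans (le_max_left _ _) hm),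
          h2 n m (le_trans (le_max_right _ _) hn) (le_trans (le_max_right _ _) hm)]
      | smul c x hx ihx =>
        obtain ⟨N1, h1⟩ := ihx
        refine ⟨N1, fun n m hn hm => ?_⟩
        rw [inner_smul_right, inner_smul_right, h1 n m hn hm]
    induction hη using Submodule.span_induction with
    | mem x hx =>
      obtain ⟨a, ha, rfl⟩ := hx
      exact stab1 a ha ζ hζ
    | zero => exact ⟨0, fun n m _ _ => by simp⟩
    | add x y hx hy ihx ihy =>
      obtain ⟨N1, h1⟩ := ihx
      obtain ⟨N2, h2⟩ := ihy
      refine ⟨max N1 N2, fun n m hn hm => ?_⟩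
      rw [map_add, map_add, inner_add_left, inner_add_left,
        h1 n m (le_trans (le_max_left _ _) hn) (le_trans (le_max_left _ _) hm),
        h2 n m (le_trans (le_max_right _ _) hn) (le_trans (le_max_right _ _) hm)]
    | smul c x hx ihx =>
      obtain ⟨N1, h1⟩ := ihx
      refine ⟨N1, fun n m hn hm => ?_⟩
      rw [map_smul, map_smul, inner_smul_left, inner_smul_left, h1 n m hn hm]
  -- Cauchy property for arbitrary vectors
  have hcauchy : ∀ (k : ℕ) (η ζ : H),
      CauchySeq (fun n => (⟪π (permPB (Equiv.swap k n)) η, ζ⟫ : ℂ)) := by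
    intro k η ζ
    rw [Metric.cauchySeq_iff']
    intro ε hε
    set C : ℝ := ‖η‖ + ‖ζ‖ + 1 with hC
    have hC0 : 0 < C := by positivity
    set δ : ℝ := min 1 (ε / (4 * C)) with hδ
    have hδ0 : 0 < δ := by
      apply lt_min one_pos
      positivity
    obtain ⟨η', hη'mem, hη'⟩ := Metric.mem_closure_iff.mp (hdense η) δ hδ0
    obtain ⟨ζ', hζ'mem, hζ'⟩ := Metric.mem_closure_iff.mp (hdense ζ) δ hδ0
    rw [dist_eq_norm] at hη' hζ'
    obtain ⟨N, hN⟩ := stab k η' hη'mem ζ' hζ'mem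
    -- termwise approximation
    have happrox : ∀ n : ℕ,
        ‖(⟪π (permPB (Equiv.swap k n)) η, ζ⟫ : ℂ) - ⟪π (permPB (Equiv.swap k n)) η', ζ'⟫‖
          ≤ δ * ‖ζ‖ + (‖η‖ + δ) * δ := by
      intro n
      have hsplit : (⟪π (permPB (Equiv.swap k n)) η, ζ⟫ : ℂ)
          - ⟪π (permPB (Equiv.swap k n)) η', ζ'⟫
          = ⟪π (permPB (Equiv.swap k n)) (η - η'), ζ⟫
            + ⟪π (permPB (Equiv.swap k n)) η', ζ - ζ'⟫ := by
        rw [map_sub, inner_sub_left, inner_sub_right]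
        ring
      rw [hsplit]
      have b1 : ‖(⟪π (permPB (Equiv.swap k n)) (η - η'), ζ⟫ : ℂ)‖ ≤ δ * ‖ζ‖ := by
        calc ‖(⟪π (permPB (Equiv.swap k n)) (η - η'), ζ⟫ : ℂ)‖
            ≤ ‖π (permPB (Equiv.swap k n)) (η - η')‖ * ‖ζ‖ := norm_inner_le_norm _ _
          _ ≤ ‖η - η'‖ * ‖ζ‖ :=
              mul_le_mul_of_nonneg_right (hsnorm _ (hswapV k n) _) (norm_nonneg _)
          _ ≤ δ * ‖ζ‖ := mul_le_mul_of_nonneg_right hη'.le (norm_nonneg _)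
      have b2 : ‖(⟪π (permPB (Equiv.swap k n)) η', ζ - ζ'⟫ : ℂ)‖ ≤ (‖η‖ + δ) * δ := by
        have hη'n : ‖η'‖ ≤ ‖η‖ + δ := by
          calc ‖η'‖ = ‖η - (η - η')‖ := by congr 1; abel
            _ ≤ ‖η‖ + ‖η - η'‖ := norm_sub_le _ _
            _ ≤ ‖η‖ + δ := by linarith [hη'.le]
        calc ‖(⟪π (permPB (Equiv.swap k n)) η', ζ - ζ'⟫ : ℂ)‖
            ≤ ‖π (permPB (Equiv.swap k n)) η'‖ * ‖ζ - ζ'‖ := norm_inner_le_norm _ _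
          _ ≤ ‖η'‖ * ‖ζ - ζ'‖ :=
              mul_le_mul_of_nonneg_right (hsnorm _ (hswapV k n) _) (norm_nonneg _)
          _ ≤ (‖η‖ + δ) * δ := by
              apply mul_le_mul hη'n hζ'.le (norm_nonneg _) (by positivity)
      calc ‖(⟪π (permPB (Equiv.swap k n)) (η - η'), ζ⟫ : ℂ)
            + ⟪π (permPB (Equiv.swap k n)) η', ζ - ζ'⟫‖
          ≤ _ + _ := norm_add_le _ _
        _ ≤ δ * ‖ζ‖ + (‖η‖ + δ) * δ := add_le_add b1 b2
    have hbound : δ * ‖ζ‖ + (‖η‖ + δ) * δ < ε / 2 := by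
      have hδ1 : δ ≤ 1 := min_le_left _ _
      have hδ2 : δ ≤ ε / (4 * C) := min_le_right _ _
      have h1 : δ * ‖ζ‖ + (‖η‖ + δ) * δ ≤ δ * (‖ζ‖ + ‖η‖ + 1) := by nlinarith [norm_nonneg η, norm_nonneg ζ]
      have h2 : δ * (‖ζ‖ + ‖η‖ + 1) ≤ (ε / (4 * C)) * C := by
        have : (‖ζ‖ + ‖η‖ + 1) = C := by rw [hC]; ring
        rw [this]
        exact mul_le_mul_of_nonneg_right hδ2 hC0.le
      have h3 : (ε / (4 * C)) * C = ε / 4 := by field_simp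
      nlinarith
    refine ⟨N, fun n hn => ?_⟩
    have key : (⟪π (permPB (Equiv.swap k n)) η', ζ'⟫ : ℂ)
        = ⟪π (permPB (Equiv.swap k N)) η', ζ'⟫ := hN n N hn le_rfl
    rw [dist_eq_norm]
    calc ‖(⟪π (permPB (Equiv.swap k n)) η, ζ⟫ : ℂ) - ⟪π (permPB (Equiv.swap k N)) η, ζ⟫‖
        = ‖((⟪π (permPB (Equiv.swap k n)) η, ζ⟫ : ℂ) - ⟪π (permPB (Equiv.swap k n)) η', ζ'⟫)
            - ((⟪π (permPB (Equiv.swap k N)) η, ζ⟫ : ℂ) - ⟪π (permPB (Equiv.swap k N)) η', ζ'⟫)‖ := by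
          rw [key]; congr 1; ring
      _ ≤ ‖(⟪π (permPB (Equiv.swap k n)) η, ζ⟫ : ℂ) - ⟪π (permPB (Equiv.swap k n)) η', ζ'⟫‖
            + ‖(⟪π (permPB (Equiv.swap k N)) η, ζ⟫ : ℂ) - ⟪π (permPB (Equiv.swap k N)) η', ζ'⟫‖ :=
          norm_sub_le _ _
      _ < ε := by
          have := happrox n
          have := happrox N
          linarith
  have hex : ∀ (k : ℕ) (η ζ : H), ∃ Lv : ℂ,
      Tendsto (fun n => (⟪π (permPB (Equiv.swap k n)) η, ζ⟫ : ℂ)) atTop (𝓝 Lv) :=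
    fun k η ζ => cauchySeq_tendsto_of_complete (hcauchy k η ζ)
  choose L hL using hex
  have hLbound : ∀ k η ζ, ‖L k η ζ‖ ≤ ‖η‖ * ‖ζ‖ := by
    intro k η ζ
    apply le_of_tendsto (hL k η ζ).norm
    filter_upwards with n
    calc ‖(⟪π (permPB (Equiv.swap k n)) η, ζ⟫ : ℂ)‖
        ≤ ‖π (permPB (Equiv.swap k n)) η‖ * ‖ζ‖ := norm_inner_le_norm _ _
      _ ≤ ‖η‖ * ‖ζ‖ := mul_le_mul_of_nonneg_right (hsnorm _ (hswapV k n) _) (norm_nonneg _)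
  have hLadd : ∀ k η ζ₁ ζ₂, L k η (ζ₁ + ζ₂) = L k η ζ₁ + L k η ζ₂ := by
    intro k η ζ₁ ζ₂
    refine tendsto_nhds_unique (hL k η (ζ₁ + ζ₂)) ?_
    refine Tendsto.congr (fun n => ?_) ((hL k η ζ₁).add (hL k η ζ₂))
    rw [inner_add_right]
  have hLsmul : ∀ k η (c : ℂ) ζ, L k η (c • ζ) = c * L k η ζ := by
    intro k η c ζ
    refine tendsto_nhds_unique (hL k η (c • ζ)) ?_
    refine Tendsto.congr (fun n => ?_) ((hL k η ζ).const_mul c)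
    rw [inner_smul_right]
  have hLaddl : ∀ k η₁ η₂ ζ, L k (η₁ + η₂) ζ = L k η₁ ζ + L k η₂ ζ := by
    intro k η₁ η₂ ζ
    refine tendsto_nhds_unique (hL k (η₁ + η₂) ζ) ?_
    refine Tendsto.congr (fun n => ?_) ((hL k η₁ ζ).add (hL k η₂ ζ))
    rw [map_add, inner_add_left]
  have hLsmull : ∀ k (c : ℂ) η ζ, L k (c • η) ζ = (starRingEnd ℂ) c * L k η ζ := by
    intro k c η ζ
    refine tendsto_nhds_unique (hL k (c • η) ζ) ?_
    refine Tendsto.congr (fun n => ?_) ((hL k η ζ).const_mul ((starRingEnd ℂ) c))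
    rw [map_smul, inner_smul_left]
  let φ : ℕ → H → (H →L[ℂ] ℂ) := fun k η => LinearMap.mkContinuous
    { toFun := fun ζ => L k η ζ
      map_add' := hLadd k η
      map_smul' := fun c ζ => by simpa using hLsmul k η c ζ } ‖η‖
    (fun ζ => by simpa using hLbound k η ζ)
  let Ov : ℕ → H → H := fun k η => (InnerProductSpace.toDual ℂ H).symm (φ k η)
  have hOv : ∀ k η ζ, (⟪Ov k η, ζ⟫ : ℂ) = L k η ζ := by
    intro k η ζ
    show (⟪(InnerProductSpace.toDual ℂ H).symm (φ k η), ζ⟫ : ℂ) = L k η ζ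
    rw [InnerProductSpace.toDual_symm_apply]
    rfl
  have hOvadd : ∀ k η₁ η₂, Ov k (η₁ + η₂) = Ov k η₁ + Ov k η₂ := by
    intro k η₁ η₂
    apply ext_inner_right ℂ
    intro v
    rw [hOv, inner_add_left, hOv, hOv, hLaddl]
  have hOvsmul : ∀ k (c : ℂ) η, Ov k (c • η) = c • Ov k η := by
    intro k c η
    apply ext_inner_right ℂ
    intro v
    rw [hOv, inner_smul_left, hOv, hLsmull]
  have hOvbound : ∀ k η, ‖Ov k η‖ ≤ 1 * ‖η‖ := by
    intro k η
    rw [_root_.one_mul]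
    by_cases h0 : ‖Ov k η‖ = 0
    · rw [h0]; exact norm_nonneg _
    · have hvpos : 0 < ‖Ov k η‖ := lt_of_le_of_ne (norm_nonneg _) (Ne.symm h0)
      have h3 : (⟪Ov k η, Ov k η⟫ : ℂ) = (‖Ov k η‖ : ℂ) ^ 2 :=
        inner_self_eq_norm_sq_to_K (Ov k η)
      have h2 : ‖Ov k η‖ ^ 2 ≤ ‖η‖ * ‖Ov k η‖ := by
        calc ‖Ov k η‖ ^ 2 = ‖(⟪Ov k η, Ov k η⟫ : ℂ)‖ := by
              rw [h3, ← Complex.ofReal_pow]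
              simp
          _ = ‖L k η (Ov k η)‖ := by rw [hOv]
          _ ≤ ‖η‖ * ‖Ov k η‖ := hLbound k η (Ov k η)
      nlinarith
  let Oclm : ℕ → H →L[ℂ] H := fun k => LinearMap.mkContinuous
    { toFun := Ov k
      map_add' := hOvadd k
      map_smul' := fun c η => by simpa using hOvsmul k c η } 1 (hOvbound k)
  have hOlim : ∀ k (η ζ : H),
      Tendsto (fun n => (⟪π (permPB (Equiv.swap k n)) η, ζ⟫ : ℂ)) atTop (𝓝 ⟪Oclm k η, ζ⟫) := by
    intro k η ζ
    have e : (⟪Oclm k η, ζ⟫ : ℂ) = L k η ζ := hOv k η ζ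
    rw [e]; exact hL k η ζ
  refine ⟨Oclm, fun k η ζ => hOlim k η ζ, ?_, ?_⟩
  -- extension of operator identities from matrix coefficients on the cyclic set
  have ext_op : ∀ A B : H →L[ℂ] H,
      (∀ (a : PB), a.Valid → ∀ (b : PB), b.Valid →
        (⟪A (π a ξ), π b ξ⟫ : ℂ) = ⟪B (π a ξ), π b ξ⟫) → A = B := by
    intro A B hAB
    apply ContinuousLinearMap.ext_on hdense
    intro x hx
    obtain ⟨a, ha, rfl⟩ := hx
    have h2 : (innerSL ℂ (A (π a ξ))) = innerSL ℂ (B (π a ξ)) := by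
      apply ContinuousLinearMap.ext_on hdense
      intro y hy
      obtain ⟨b, hb, rfl⟩ := hy
      simpa using hAB a ha b hb
    apply ext_inner_right ℂ
    intro v
    have := congrArg (fun f : H →L[ℂ] ℂ => f v) h2
    simpa using this
  have swap_supp : ∀ (u v x : ℕ), Equiv.swap u v x ≠ x → x = u ∨ x = v := by
    intro u v x hx
    by_contra hc
    push_neg at hc
    exact hx (Equiv.swap_apply_of_ne_of_ne hc.1 hc.2)
  · -- commutation
    intro k l
    rcases eq_or_ne k l with rfl | hkl
    · rfl
    apply ext_op
    intro a ha b hb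
    simp only [ContinuousLinearMap.comp_apply]
    obtain ⟨N, hN⟩ := bddN (badSet a ∪ badSet b ∪ {k} ∪ {l})
      ((((badSet_finite ha).union (badSet_finite hb)).union
        (Set.finite_singleton k)).union (Set.finite_singleton l))
    have hkN : k < N := hN k (Or.inl (Or.inr rfl))
    have hlN : l < N := hN l (Or.inr rfl)
    have hnb : ∀ x : ℕ, N ≤ x → x ∉ badSet a ∧ x ∉ badSet b := by
      intro x hxN
      constructor
      · intro h; exact absurd (hN x (Or.inl (Or.inl (Or.inl h)))) (by omega)
      · intro h; exact absurd (hN x (Or.inl (Or.inl (Or.inr h)))) (by omega)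
    -- vary the outer index
    have hF1 : ∀ p q n n' m : ℕ, p < N → q < N → N ≤ n → N ≤ n' → n ≠ m → n' ≠ m →
        (⟪π (permPB (Equiv.swap p n)) (π (permPB (Equiv.swap q m)) (π a ξ)), π b ξ⟫ : ℂ)
          = ⟪π (permPB (Equiv.swap p n')) (π (permPB (Equiv.swap q m)) (π a ξ)), π b ξ⟫ := by
      intro p q n n' m hp hq hn hn' hnm hn'm
      have e : ∀ j : ℕ, (⟪π (permPB (Equiv.swap p j)) (π (permPB (Equiv.swap q m)) (π a ξ)), π b ξ⟫ : ℂ)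
          = ⟪π (permPB (Equiv.swap p j)) (π ((permPB (Equiv.swap q m)).mul a) ξ), π b ξ⟫ := by
        intro j
        rw [happly (permPB (Equiv.swap q m)) a (hswapV q m) ha]
      rw [e n, e n']
      have hbadcond : ∀ j : ℕ, N ≤ j → j ≠ m → j ∉ badSet ((permPB (Equiv.swap q m)).mul a) := by
        intro j hj hjm h
        rcases badSet_perm_mul a h with h | h
        · exact (hnb j hj).1 h
        · rcases swap_supp q m j h with rfl | rfl
          · omega
          · exact hjm rfl
      exact core p ((permPB (Equiv.swap q m)).mul a) b (mul_valid (hswapV q m) ha) hb n n'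
        (hbadcond n hn hnm) (hnb n hn).2 (by omega)
        (hbadcond n' hn' hn'm) (hnb n' hn').2 (by omega)
    -- vary the inner index
    have hF2 : ∀ p q m m' n : ℕ, p < N → q < N → N ≤ m → N ≤ m' → m ≠ n → m' ≠ n →
        (⟪π (permPB (Equiv.swap p n)) (π (permPB (Equiv.swap q m)) (π a ξ)), π b ξ⟫ : ℂ)
          = ⟪π (permPB (Equiv.swap p n)) (π (permPB (Equiv.swap q m')) (π a ξ)), π b ξ⟫ := by
      intro p q m m' n hp hq hm hm' hmn hm'n
      have e : ∀ j : ℕ, (⟪π (permPB (Equiv.swap p n)) (π (permPB (Equiv.swap q j)) (π a ξ)), π b ξ⟫ : ℂ)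
          = ⟪π (permPB (Equiv.swap q j)) (π a ξ), π ((permPB (Equiv.swap p n)).mul b) ξ⟫ := by
        intro j
        rw [hswapmove p n, happly (permPB (Equiv.swap p n)) b (hswapV p n) hb]
      rw [e m, e m']
      have hbadcond : ∀ j : ℕ, N ≤ j → j ≠ n → j ∉ badSet ((permPB (Equiv.swap p n)).mul b) := by
        intro j hj hjn h
        rcases badSet_perm_mul b h with h | h
        · exact (hnb j hj).2 h
        · rcases swap_supp p n j h with rfl | rfl
          · omega
          · exact hjn rfl
      exact core q a ((permPB (Equiv.swap p n)).mul b) ha (mul_valid (hswapV p n) hb) m m'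
        (hnb m hm).1 (hbadcond m hm hmn) (by omega)
        (hnb m' hm').1 (hbadcond m' hm' hm'n) (by omega)
    -- value of the double limit
    have claim : ∀ p q : ℕ, p < N → q < N →
        (⟪Oclm p (Oclm q (π a ξ)), π b ξ⟫ : ℂ)
          = ⟪π (permPB (Equiv.swap p N)) (π (permPB (Equiv.swap q (N+1))) (π a ξ)), π b ξ⟫ := by
      intro p q hpN hqN
      have hulim : Tendsto (fun n => (⟪π (permPB (Equiv.swap p n)) (Oclm q (π a ξ)), π b ξ⟫ : ℂ))
          atTop (𝓝 (⟪Oclm p (Oclm q (π a ξ)), π b ξ⟫)) := hOlim p _ _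
      have hueq : ∀ n : ℕ, N + 2 ≤ n →
          (⟪π (permPB (Equiv.swap p n)) (Oclm q (π a ξ)), π b ξ⟫ : ℂ)
            = ⟪π (permPB (Equiv.swap p N)) (π (permPB (Equiv.swap q (N+1))) (π a ξ)), π b ξ⟫ := by
        intro n hn
        have h1 : Tendsto (fun m => (⟪π (permPB (Equiv.swap p n)) (π (permPB (Equiv.swap q m)) (π a ξ)), π b ξ⟫ : ℂ))
            atTop (𝓝 (⟪π (permPB (Equiv.swap p n)) (Oclm q (π a ξ)), π b ξ⟫)) := by
          rw [hswapmove p n (Oclm q (π a ξ)) (π b ξ)]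
          exact Tendsto.congr (fun m => (hswapmove p n _ _).symm)
            (hOlim q (π a ξ) (π (permPB (Equiv.swap p n)) (π b ξ)))
        have h2 : Tendsto (fun m => (⟪π (permPB (Equiv.swap p n)) (π (permPB (Equiv.swap q m)) (π a ξ)), π b ξ⟫ : ℂ))
            atTop (𝓝 (⟪π (permPB (Equiv.swap p n)) (π (permPB (Equiv.swap q (n + N + 2))) (π a ξ)), π b ξ⟫)) := by
          refine Tendsto.congr' ?_ tendsto_const_nhds
          filter_upwards [eventually_ge_atTop (n + N + 2)] with m hm
          exact hF2 p q (n + N + 2) m n hpN hqN (by omega) (by omega) (by omega) (by omega)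
        have huv := tendsto_nhds_unique h1 h2
        rw [huv]
        calc (⟪π (permPB (Equiv.swap p n)) (π (permPB (Equiv.swap q (n + N + 2))) (π a ξ)), π b ξ⟫ : ℂ)
            = ⟪π (permPB (Equiv.swap p N)) (π (permPB (Equiv.swap q (n + N + 2))) (π a ξ)), π b ξ⟫ :=
              hF1 p q n N (n + N + 2) hpN hqN (by omega) (by omega) (by omega) (by omega)
          _ = ⟪π (permPB (Equiv.swap p N)) (π (permPB (Equiv.swap q (N+1))) (π a ξ)), π b ξ⟫ :=
              hF2 p q (n + N + 2) (N+1) N hpN hqN (by omega) (by omega) (by omega) (by omega)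
      refine tendsto_nhds_unique hulim (Tendsto.congr' ?_ tendsto_const_nhds)
      filter_upwards [eventually_ge_atTop (N + 2)] with n hn
      exact (hueq n hn).symm
    rw [claim k l hkN hlN, claim l k hlN hkN]
    -- bridge: commuting disjoint swaps
    have hdisj : ∀ x : ℕ, Equiv.swap k N x = x ∨ Equiv.swap l (N+1) x = x := by
      intro x
      by_cases hx : x = k ∨ x = N
      · right
        rcases hx with rfl | rfl
        · exact Equiv.swap_apply_of_ne_of_ne hkl (by omega)
        · exact Equiv.swap_apply_of_ne_of_ne (by omega) (by omega)
      · push_neg at hx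
        left
        exact Equiv.swap_apply_of_ne_of_ne hx.1 hx.2
    have hcomm : (permPB (Equiv.swap k N)).mul (permPB (Equiv.swap l (N+1)))
        = (permPB (Equiv.swap l (N+1))).mul (permPB (Equiv.swap k N)) := by
      rw [permPB_mul, permPB_mul]
      exact congrArg permPB (Equiv.Perm.Disjoint.commute hdisj).eq
    calc (⟪π (permPB (Equiv.swap k N)) (π (permPB (Equiv.swap l (N+1))) (π a ξ)), π b ξ⟫ : ℂ)
        = ⟪π ((permPB (Equiv.swap k N)).mul (permPB (Equiv.swap l (N+1)))) (π a ξ), π b ξ⟫ := by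
          rw [happly _ _ (hswapV k N) (hswapV l (N+1))]
      _ = ⟪π (permPB (Equiv.swap l (N+1))) (π (permPB (Equiv.swap k N)) (π a ξ)), π b ξ⟫ := by
          rw [hcomm, ← happly _ _ (hswapV l (N+1)) (hswapV k N)]
      _ = ⟪π (permPB (Equiv.swap l (N+1))) (π (permPB (Equiv.swap k (N+2))) (π a ξ)), π b ξ⟫ :=
          hF2 l k N (N+2) (N+1) hlN hkN (by omega) (by omega) (by omega) (by omega)
      _ = ⟪π (permPB (Equiv.swap l N)) (π (permPB (Equiv.swap k (N+2))) (π a ξ)), π b ξ⟫ :=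
          hF1 l k (N+1) N (N+2) hlN hkN (by omega) (by omega) (by omega) (by omega)
      _ = ⟪π (permPB (Equiv.swap l N)) (π (permPB (Equiv.swap k (N+1))) (π a ξ)), π b ξ⟫ :=
          hF2 l k (N+2) (N+1) N hlN hkN (by omega) (by omega) (by omega) (by omega)
  · -- covariance
    intro s hs k
    ext η
    apply ext_inner_right ℂ
    intro ζ
    simp only [ContinuousLinearMap.comp_apply]
    have hstep : (⟪π (permPB s) (Oclm k (π (permPB s⁻¹) η)), ζ⟫ : ℂ)
        = ⟪Oclm k (π (permPB s⁻¹) η), π (permPB s⁻¹) ζ⟫ := hmove s hs _ ζ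
    rw [hstep]
    obtain ⟨M, hM⟩ := bddN {x | s x ≠ x} hs
    have heq : (fun n => (⟪π (permPB (Equiv.swap (s k) n)) η, ζ⟫ : ℂ))
        =ᶠ[atTop] (fun n => (⟪π (permPB (Equiv.swap k n)) (π (permPB s⁻¹) η), π (permPB s⁻¹) ζ⟫ : ℂ)) := by
      filter_upwards [eventually_ge_atTop M] with n hn
      have hsn : s n = n := by
        by_contra h
        exact absurd (hM n h) (by omega)
      have hperm : (permPB s).mul ((permPB (Equiv.swap k n)).mul (permPB s⁻¹))
          = permPB (Equiv.swap (s k) n) := by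
        rw [permPB_mul, permPB_mul, ← mul_assoc, ← Equiv.swap_apply_apply, hsn]
      have hsV := permPB_valid hs
      have hsV' := permPB_valid (finPerm_inv hs)
      calc (⟪π (permPB (Equiv.swap (s k) n)) η, ζ⟫ : ℂ)
          = ⟪π ((permPB s).mul ((permPB (Equiv.swap k n)).mul (permPB s⁻¹))) η, ζ⟫ := by
            rw [hperm]
        _ = ⟪π (permPB s) (π (permPB (Equiv.swap k n)) (π (permPB s⁻¹) η)), ζ⟫ := by
            rw [happly _ _ (hswapV k n) hsV', happly _ _ hsV (mul_valid (hswapV k n) hsV')]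
        _ = ⟪π (permPB (Equiv.swap k n)) (π (permPB s⁻¹) η), π (permPB s⁻¹) ζ⟫ :=
            hmove s hs _ ζ
    exact tendsto_nhds_unique (hOlim k (π (permPB s⁻¹) η) (π (permPB s⁻¹) ζ))
      (Tendsto.congr' heq (hOlim (s k) η ζ))
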